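/- Let J be the free ℤ-module on basis t₁, …, t₁₈ with multiplication t_i · t_j = Σ_k (M_i)_{j,k} t_k, where M₁ = I, M₂, M₃, M₄ are the explicit 18×18 matrices from the paper, and the remaining M_j are the stated polynomial expressions in M₂, M₃, M₄. Then the ℤ-span of {t₁, t₄, t₁₀, t₁₆, t₁₈} is closed under multiplication, i.e., forms a subring of J containing the identity t₁. -/

import Mathlib

open Polynomial Matrix

def P2 : Matrix (Fin 18) (Fin 18) ℤ :=
  !![0, 1, 0, 0, 0, 0, 0, 0, 0, 0, 0, 0, 0, 0, 0, 0, 0, 0;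
  1, 1, 1, 1, 1, 0, 0, 0, 0, 0, 0, 0, 0, 0, 0, 0, 0, 0;
  0, 1, 1, 0, 1, 0, 1, 0, 0, 0, 0, 0, 0, 0, 0, 0, 0, 0;
  0, 1, 0, 0, 0, 1, 0, 0, 0, 0, 0, 0, 0, 0, 0, 0, 0, 0;
  0, 1, 1, 0, 2, 1, 1, 1, 1, 0, 0, 0, 0, 0, 0, 0, 0, 0;
  0, 0, 0, 1, 1, 1, 0, 0, 1, 1, 0, 0, 0, 0, 0, 0, 0, 0;
  0, 0, 1, 0, 1, 0, 0, 1, 0, 0, 1, 0, 0, 0, 0, 0, 0, 0;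
  0, 0, 0, 0, 1, 0, 1, 1, 1, 0, 1, 0, 1, 0, 0, 0, 0, 0;
  0, 0, 0, 0, 1, 1, 0, 1, 2, 0, 1, 1, 0, 1, 0, 0, 0, 0;
  0, 0, 0, 0, 0, 1, 0, 0, 0, 0, 0, 1, 0, 0, 0, 0, 0, 0;
  0, 0, 0, 0, 0, 0, 1, 1, 1, 0, 1, 0, 1, 1, 0, 0, 0, 0;
  0, 0, 0, 0, 0, 0, 0, 0, 1, 1, 0, 1, 0, 1, 0, 1, 0, 0;
  0, 0, 0, 0, 0, 0, 0, 1, 0, 0, 1, 0, 0, 1, 1, 0, 0, 0;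
  0, 0, 0, 0, 0, 0, 0, 0, 1, 0, 1, 1, 1, 2, 1, 0, 1, 0;
  0, 0, 0, 0, 0, 0, 0, 0, 0, 0, 0, 0, 1, 1, 1, 0, 1, 0;
  0, 0, 0, 0, 0, 0, 0, 0, 0, 0, 0, 1, 0, 0, 0, 0, 1, 0;
  0, 0, 0, 0, 0, 0, 0, 0, 0, 0, 0, 0, 0, 1, 1, 1, 1, 1;
  0, 0, 0, 0, 0, 0, 0, 0, 0, 0, 0, 0, 0, 0, 0, 0, 1, 0]
def P3 : Matrix (Fin 18) (Fin 18) ℤ :=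
  !![0, 0, 1, 0, 0, 0, 0, 0, 0, 0, 0, 0, 0, 0, 0, 0, 0, 0;
  0, 1, 1, 0, 1, 1, 0, 0, 0, 0, 0, 0, 0, 0, 0, 0, 0, 0;
  1, 1, 1, 0, 1, 0, 0, 1, 0, 0, 0, 0, 0, 0, 0, 0, 0, 0;
  0, 0, 0, 0, 1, 0, 0, 0, 0, 0, 0, 0, 0, 0, 0, 0, 0, 0;
  0, 1, 1, 1, 2, 1, 1, 1, 1, 0, 1, 0, 0, 0, 0, 0, 0, 0;
  0, 1, 0, 0, 1, 1, 0, 0, 1, 0, 0, 1, 0, 0, 0, 0, 0, 0;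
  0, 0, 0, 0, 1, 0, 1, 1, 1, 0, 0, 0, 0, 0, 0, 0, 0, 0;
  0, 0, 1, 0, 1, 0, 1, 1, 1, 0, 1, 0, 0, 1, 0, 0, 0, 0;
  0, 0, 0, 0, 1, 1, 1, 1, 2, 1, 1, 1, 1, 1, 0, 0, 0, 0;
  0, 0, 0, 0, 0, 0, 0, 0, 1, 0, 0, 0, 0, 0, 0, 0, 0, 0;
  0, 0, 0, 0, 1, 0, 0, 1, 1, 0, 1, 0, 1, 1, 1, 0, 0, 0;
  0, 0, 0, 0, 0, 1, 0, 0, 1, 0, 0, 1, 0, 1, 0, 0, 1, 0;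
  0, 0, 0, 0, 0, 0, 0, 0, 1, 0, 1, 0, 1, 1, 0, 0, 0, 0;
  0, 0, 0, 0, 0, 0, 0, 1, 1, 0, 1, 1, 1, 2, 1, 1, 1, 0;
  0, 0, 0, 0, 0, 0, 0, 0, 0, 0, 1, 0, 0, 1, 1, 0, 1, 1;
  0, 0, 0, 0, 0, 0, 0, 0, 0, 0, 0, 0, 0, 1, 0, 0, 0, 0;
  0, 0, 0, 0, 0, 0, 0, 0, 0, 0, 0, 1, 0, 1, 1, 0, 1, 0;
  0, 0, 0, 0, 0, 0, 0, 0, 0, 0, 0, 0, 0, 0, 1, 0, 0, 0]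
def P4 : Matrix (Fin 18) (Fin 18) ℤ :=
  !![0, 0, 0, 1, 0, 0, 0, 0, 0, 0, 0, 0, 0, 0, 0, 0, 0, 0;
  0, 1, 0, 0, 0, 0, 1, 0, 0, 0, 0, 0, 0, 0, 0, 0, 0, 0;
  0, 0, 0, 0, 1, 0, 0, 0, 0, 0, 0, 0, 0, 0, 0, 0, 0, 0;
  1, 0, 0, 1, 0, 0, 0, 0, 0, 1, 0, 0, 0, 0, 0, 0, 0, 0;
  0, 0, 1, 0, 1, 0, 0, 0, 1, 0, 0, 0, 0, 0, 0, 0, 0, 0;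
  0, 0, 0, 0, 0, 1, 0, 1, 0, 0, 0, 0, 0, 0, 0, 0, 0, 0;
  0, 1, 0, 0, 0, 0, 1, 0, 0, 0, 0, 0, 1, 0, 0, 0, 0, 0;
  0, 0, 0, 0, 0, 1, 0, 1, 0, 0, 1, 0, 0, 0, 0, 0, 0, 0;
  0, 0, 0, 0, 1, 0, 0, 0, 1, 0, 0, 0, 0, 1, 0, 0, 0, 0;
  0, 0, 0, 1, 0, 0, 0, 0, 0, 1, 0, 0, 0, 0, 0, 1, 0, 0;
  0, 0, 0, 0, 0, 0, 0, 1, 0, 0, 1, 1, 0, 0, 0, 0, 0, 0;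
  0, 0, 0, 0, 0, 0, 0, 0, 0, 0, 1, 1, 0, 0, 0, 0, 0, 0;
  0, 0, 0, 0, 0, 0, 1, 0, 0, 0, 0, 0, 1, 0, 0, 0, 1, 0;
  0, 0, 0, 0, 0, 0, 0, 0, 1, 0, 0, 0, 0, 1, 1, 0, 0, 0;
  0, 0, 0, 0, 0, 0, 0, 0, 0, 0, 0, 0, 0, 1, 0, 0, 0, 0;
  0, 0, 0, 0, 0, 0, 0, 0, 0, 1, 0, 0, 0, 0, 0, 1, 0, 1;
  0, 0, 0, 0, 0, 0, 0, 0, 0, 0, 0, 0, 1, 0, 0, 0, 1, 0;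
  0, 0, 0, 0, 0, 0, 0, 0, 0, 0, 0, 0, 0, 0, 0, 1, 0, 0]

def P1 : Matrix (Fin 18) (Fin 18) ℤ := 1
def P5 : Matrix (Fin 18) (Fin 18) ℤ := -1 - P2 - P3 - P4 + P2 ^ 2
def P6 : Matrix (Fin 18) (Fin 18) ℤ := 1 + P4 - P2 ^ 2 + P2 * P3
def P7 : Matrix (Fin 18) (Fin 18) ℤ := -P2 + P2 * P4
def P8 : Matrix (Fin 18) (Fin 18) ℤ := P4 - P2 ^ 2 + P3 ^ 2
def P9 : Matrix (Fin 18) (Fin 18) ℤ :=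
  1 + P2 + P3 - P2 ^ 2 - 2 * P2 * P3 - 2 * P2 * P4 - P3 ^ 2 + P2 ^ 3
def P10 : Matrix (Fin 18) (Fin 18) ℤ := -1 - P4 + P4 ^ 2
def P11 : Matrix (Fin 18) (Fin 18) ℤ :=
  1 + 2 * P2 + P2 * P4 - P3 ^ 2 - P2 ^ 3 + P2 ^ 2 * P3
def P12 : Matrix (Fin 18) (Fin 18) ℤ :=
  -2 - 2 * P2 - P4 + 2 * P2 ^ 2 + P2 * P3 + 2 * P2 * P4 + P3 ^ 2 - P2 ^ 3 -
    P2 ^ 2 * P3 + P2 * P3 ^ 2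
def P13 : Matrix (Fin 18) (Fin 18) ℤ := -2 * P2 * P4 + P2 * P4 ^ 2
def P14 : Matrix (Fin 18) (Fin 18) ℤ :=
  -2 - 2 * P2 - 2 * P3 - P4 + 2 * P2 ^ 2 + 2 * P2 * P3 + P3 ^ 2 -
    2 * P2 ^ 2 * P3 + P3 ^ 3
def P15 : Matrix (Fin 18) (Fin 18) ℤ :=
  3 + 3 * P2 + 5 * P3 + 3 * P4 - P2 ^ 2 + 4 * P2 * P3 + 6 * P2 * P4 + P3 ^ 2 -
    P4 ^ 2 - P2 ^ 3 + 2 * P2 ^ 2 * P3 - 3 * P2 * P3 ^ 2 - 2 * P2 * P4 ^ 2 -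
    4 * P3 ^ 3 + P2 ^ 2 * P3 ^ 2
def P16 : Matrix (Fin 18) (Fin 18) ℤ := 1 - P4 - 2 * P4 ^ 2 + P4 ^ 3
def P17 : Matrix (Fin 18) (Fin 18) ℤ :=
  5 + 6 * P2 + 2 * P3 + 4 * P4 - 4 * P2 ^ 2 - 3 * P2 * P3 + 2 * P2 * P4 -
    P4 ^ 2 + 6 * P2 ^ 2 * P3 - 3 * P2 * P3 ^ 2 - P2 * P4 ^ 2 - 2 * P3 ^ 3 -
    P2 ^ 2 * P3 ^ 2 + P2 * P3 ^ 3
def P18 : Matrix (Fin 18) (Fin 18) ℤ := 3 * P4 - 3 * P4 ^ 3 + P4 ^ 4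

/-- The family of all eighteen structure–constant matrices. -/
def PJ : Fin 18 → Matrix (Fin 18) (Fin 18) ℤ :=
  ![P1, P2, P3, P4, P5, P6, P7, P8, P9, P10, P11, P12, P13, P14, P15, P16,
    P17, P18]

/-- The multiplication of J(A₉): tᵢ · tⱼ = Σ_k (Mᵢ)_(j,k) t_k, extended bilinearly. -/
def mulJ (a b : Fin 18 → ℤ) : Fin 18 → ℤ :=
  fun k => ∑ i : Fin 18, ∑ j : Fin 18, a i * b j * PJ i j k

/-- The basis vectors t₁, …, t₁₈ (zero-indexed). -/
def t (i : Fin 18) : Fin 18 → ℤ := Pi.single i 1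


set_option maxRecDepth 100000
set_option maxHeartbeats 4000000

lemma mulJ_tt (i j : Fin 18) : mulJ (t i) (t j) = fun k => PJ i j k := by
  funext k
  simp [mulJ, t, Pi.single_apply, ite_mul, zero_mul, one_mul,
    Finset.sum_ite_eq', mul_ite, mul_zero, mul_one, Finset.sum_ite_eq]

lemma mulJ_zero_left (b : Fin 18 → ℤ) : mulJ 0 b = 0 := by
  funext k; simp [mulJ]

lemma mulJ_zero_right (a : Fin 18 → ℤ) : mulJ a 0 = 0 := by
  funext k; simp [mulJ]

lemma mulJ_add_left (a a' b : Fin 18 → ℤ) :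
    mulJ (a + a') b = mulJ a b + mulJ a' b := by
  funext k; simp [mulJ, add_mul, Finset.sum_add_distrib]

lemma mulJ_add_right (a b b' : Fin 18 → ℤ) :
    mulJ a (b + b') = mulJ a b + mulJ a b' := by
  funext k; simp [mulJ, mul_add, add_mul, Finset.sum_add_distrib]

lemma mulJ_smul_left (c : ℤ) (a b : Fin 18 → ℤ) :
    mulJ (c • a) b = c • mulJ a b := by
  funext k
  simp [mulJ, Finset.mul_sum, smul_eq_mul, mul_assoc]

lemma mulJ_smul_right (c : ℤ) (a b : Fin 18 → ℤ) :
    mulJ a (c • b) = c • mulJ a b := by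
  funext k
  simp [mulJ, Finset.mul_sum, smul_eq_mul, mul_assoc, mul_left_comm]

lemma PJ_row_zero : ∀ j k : Fin 18, PJ 0 j k = if j = k then 1 else 0 := by
  intro j k; show (1 : Matrix (Fin 18) (Fin 18) ℤ) j k = _; rw [Matrix.one_apply]

lemma PJ_col_zero : ∀ i k : Fin 18, PJ i 0 k = if i = k then 1 else 0 := by
  decide

/-- The ℤ-span of {t₁, t₄, t₁₀, t₁₆, t₁₈} is closed under multiplication and
contains the identity t₁ of J(A₉). -/
theorem stmt16 :
    (∀ a b : Fin 18 → ℤ,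
        a ∈ Submodule.span ℤ ({t 0, t 3, t 9, t 15, t 17} : Set (Fin 18 → ℤ)) →
        b ∈ Submodule.span ℤ ({t 0, t 3, t 9, t 15, t 17} : Set (Fin 18 → ℤ)) →
        mulJ a b ∈
          Submodule.span ℤ ({t 0, t 3, t 9, t 15, t 17} : Set (Fin 18 → ℤ))) ∧
    (∀ a : Fin 18 → ℤ, mulJ (t 0) a = a ∧ mulJ a (t 0) = a) := by
  constructor
  · intro a b ha hb
    have h0 : t 0 ∈ Submodule.span ℤ ({t 0, t 3, t 9, t 15, t 17} : Set (Fin 18 → ℤ)) :=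
      Submodule.subset_span (by simp)
    have h3 : t 3 ∈ Submodule.span ℤ ({t 0, t 3, t 9, t 15, t 17} : Set (Fin 18 → ℤ)) :=
      Submodule.subset_span (by simp)
    have h9 : t 9 ∈ Submodule.span ℤ ({t 0, t 3, t 9, t 15, t 17} : Set (Fin 18 → ℤ)) :=
      Submodule.subset_span (by simp)
    have h15 : t 15 ∈ Submodule.span ℤ ({t 0, t 3, t 9, t 15, t 17} : Set (Fin 18 → ℤ)) :=
      Submodule.subset_span (by simp)
    have h17 : t 17 ∈ Submodule.span ℤ ({t 0, t 3, t 9, t 15, t 17} : Set (Fin 18 → ℤ)) :=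
      Submodule.subset_span (by simp)
    induction ha using Submodule.span_induction with
    | mem x hx =>
      induction hb using Submodule.span_induction with
      | mem y hy =>
        simp only [Set.mem_insert_iff, Set.mem_singleton_iff] at hx hy
        rcases hx with rfl | rfl | rfl | rfl | rfl <;>
          rcases hy with rfl | rfl | rfl | rfl | rfl
        · have e : mulJ (t 0) (t 0) = t 0 := by
            rw [mulJ_tt]; decide
          rw [e]; exact h0
        · have e : mulJ (t 0) (t 3) = t 3 := by
            rw [mulJ_tt]; decide
          rw [e]; exact h3
        · have e : mulJ (t 0) (t 9) = t 9 := by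
            rw [mulJ_tt]; decide
          rw [e]; exact h9
        · have e : mulJ (t 0) (t 15) = t 15 := by
            rw [mulJ_tt]; decide
          rw [e]; exact h15
        · have e : mulJ (t 0) (t 17) = t 17 := by
            rw [mulJ_tt]; decide
          rw [e]; exact h17
        · have e : mulJ (t 3) (t 0) = t 3 := by
            rw [mulJ_tt]; decide
          rw [e]; exact h3
        · have e : mulJ (t 3) (t 3) = t 0 + t 3 + t 9 := by
            rw [mulJ_tt]; decide
          rw [e]; exact add_mem (add_mem (h0) h3) h9
        · have e : mulJ (t 3) (t 9) = t 3 + t 9 + t 15 := by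
            rw [mulJ_tt]; decide
          rw [e]; exact add_mem (add_mem (h3) h9) h15
        · have e : mulJ (t 3) (t 15) = t 9 + t 15 + t 17 := by
            rw [mulJ_tt]; decide
          rw [e]; exact add_mem (add_mem (h9) h15) h17
        · have e : mulJ (t 3) (t 17) = t 15 := by
            rw [mulJ_tt]; decide
          rw [e]; exact h15
        · have e : mulJ (t 9) (t 0) = t 9 := by
            rw [mulJ_tt]; decide
          rw [e]; exact h9
        · have e : mulJ (t 9) (t 3) = t 3 + t 9 + t 15 := by
            rw [mulJ_tt]; decide
          rw [e]; exact add_mem (add_mem (h3) h9) h15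
        · have e : mulJ (t 9) (t 9) = t 0 + t 3 + t 9 + t 15 + t 17 := by
            rw [mulJ_tt]; decide
          rw [e]; exact add_mem (add_mem (add_mem (add_mem (h0) h3) h9) h15) h17
        · have e : mulJ (t 9) (t 15) = t 3 + t 9 + t 15 := by
            rw [mulJ_tt]; decide
          rw [e]; exact add_mem (add_mem (h3) h9) h15
        · have e : mulJ (t 9) (t 17) = t 9 := by
            rw [mulJ_tt]; decide
          rw [e]; exact h9
        · have e : mulJ (t 15) (t 0) = t 15 := by
            rw [mulJ_tt]; decide
          rw [e]; exact h15
        · have e : mulJ (t 15) (t 3) = t 9 + t 15 + t 17 := by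
            rw [mulJ_tt]; decide
          rw [e]; exact add_mem (add_mem (h9) h15) h17
        · have e : mulJ (t 15) (t 9) = t 3 + t 9 + t 15 := by
            rw [mulJ_tt]; decide
          rw [e]; exact add_mem (add_mem (h3) h9) h15
        · have e : mulJ (t 15) (t 15) = t 0 + t 3 + t 9 := by
            rw [mulJ_tt]; decide
          rw [e]; exact add_mem (add_mem (h0) h3) h9
        · have e : mulJ (t 15) (t 17) = t 3 := by
            rw [mulJ_tt]; decide
          rw [e]; exact h3
        · have e : mulJ (t 17) (t 0) = t 17 := by
            rw [mulJ_tt]; decide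
          rw [e]; exact h17
        · have e : mulJ (t 17) (t 3) = t 15 := by
            rw [mulJ_tt]; decide
          rw [e]; exact h15
        · have e : mulJ (t 17) (t 9) = t 9 := by
            rw [mulJ_tt]; decide
          rw [e]; exact h9
        · have e : mulJ (t 17) (t 15) = t 3 := by
            rw [mulJ_tt]; decide
          rw [e]; exact h3
        · have e : mulJ (t 17) (t 17) = t 0 := by
            rw [mulJ_tt]; decide
          rw [e]; exact h0
      | zero => rw [mulJ_zero_right]; exact zero_mem _
      | add y z hy hz ihy ihz => rw [mulJ_add_right]; exact add_mem ihy ihz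
      | smul c y hy ih => rw [mulJ_smul_right]; exact Submodule.smul_mem _ _ ih
    | zero => rw [mulJ_zero_left]; exact zero_mem _
    | add x y hx hy ihx ihy => rw [mulJ_add_left]; exact add_mem ihx ihy
    | smul c x hx ih => rw [mulJ_smul_left]; exact Submodule.smul_mem _ _ ih
  · intro a
    constructor
    · funext k
      simp only [mulJ]
      rw [Fintype.sum_eq_single (0 : Fin 18)
        (by intro i hi; simp [t, Pi.single_eq_of_ne hi])]
      simp [t, PJ_row_zero, mul_ite, Finset.sum_ite_eq']
    · funext k
      simp only [mulJ]
      have h : ∀ i : Fin 18, (∑ j : Fin 18, a i * t 0 j * PJ i j k)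
          = a i * PJ i 0 k := by
        intro i
        rw [Fintype.sum_eq_single (0 : Fin 18)
          (by intro j hj; simp [t, Pi.single_eq_of_ne hj])]
        simp [t]
      simp only [h, PJ_col_zero, mul_ite, mul_one, mul_zero]
      simp [Finset.sum_ite_eq']
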